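/- Let X and Y be edge-disjoint matchings, each with at least one edge, and let ℓ_Y be a fixed ordering of Y. Then there is an ordering ℓ_X of X such that ms(ℓ_X ∨ ℓ_Y) ≥ |E(X)|/2. -/

import Mathlib

open SimpleGraph

/-- Two edges are adjacent if they are distinct and share a vertex. -/
def EdgesAdj {V : Type*} (e e' : Sym2 V) : Prop :=
  e ≠ e' ∧ ∃ v : V, v ∈ e ∧ v ∈ e'

/-- `ms` of an ordering of a graph, the ordering being given as the list of edges
in increasing label order: the largest `s ∈ {1,…,m}` such that any ordered pair of
adjacent edges `(e,e')` with `ℓ(e) < ℓ(e')` has forward distance at least `s`. -/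
noncomputable def msList {V : Type*} (L : List (Sym2 V)) : ℕ :=
  sSup {s | 1 ≤ s ∧ s ≤ L.length ∧ ∀ i j e e', i < j →
    L[i]? = some e → L[j]? = some e' → EdgesAdj e e' → s ≤ j - i}

/-- `cms` of an ordering of a graph: the largest `s ∈ {1,…,m}` such that every pair of
adjacent edges is at cyclic distance at least `s`. -/
noncomputable def cmsList {V : Type*} (L : List (Sym2 V)) : ℕ :=
  sSup {s | 1 ≤ s ∧ s ≤ L.length ∧ ∀ i j e e', i < j →
    L[i]? = some e → L[j]? = some e' → EdgesAdj e e' →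
    s ≤ min (j - i) (L.length - (j - i))}

/-- `L` is an ordering of `G`: it lists every edge of `G` exactly once. -/
def IsOrdering {V : Type*} (G : SimpleGraph V) (L : List (Sym2 V)) : Prop :=
  L.Nodup ∧ ∀ e, e ∈ L ↔ e ∈ G.edgeSet

/-- Cyclic matching sequenceability of a graph: the maximum of `cmsList` over orderings. -/
noncomputable def cms {V : Type*} (G : SimpleGraph V) : ℕ :=
  sSup {k | ∃ L, IsOrdering G L ∧ cmsList L = k}

/-- Number of edges of a graph. -/
noncomputable def numEdges {V : Type*} (G : SimpleGraph V) : ℕ :=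
  Nat.card G.edgeSet

/-- The chromatic index: the least number of colours in a proper edge colouring. -/
noncomputable def chromaticIndex {V : Type*} (G : SimpleGraph V) : ℕ :=
  sInf {c | ∃ f : G.edgeSet → Fin c, ∀ e e' : G.edgeSet, EdgesAdj e.1 e'.1 → f e ≠ f e'}

/-- The edge set of `G` forms a matching (no two distinct edges share a vertex). -/
def IsMatchingGraph {V : Type*} (G : SimpleGraph V) : Prop :=
  ∀ e ∈ G.edgeSet, ∀ e' ∈ G.edgeSet, ¬ EdgesAdj e e'

/-- `G` is regular of degree `d`. -/
def IsRegularGraph {V : Type*} (G : SimpleGraph V) (d : ℕ) : Prop :=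
  ∀ v : V, Nat.card (G.neighborSet v) = d

/-- A finite set of edges of `G` forming a matching. -/
def IsMatchingSet {V : Type*} (G : SimpleGraph V) (M : Finset (Sym2 V)) : Prop :=
  ↑M ⊆ G.edgeSet ∧ ∀ e ∈ M, ∀ e' ∈ M, ¬ EdgesAdj e e'

/-- The matching number of a graph. -/
noncomputable def matchingNumber {V : Type*} (G : SimpleGraph V) : ℕ :=
  sSup {k | ∃ M : Finset (Sym2 V), IsMatchingSet G M ∧ M.card = k}
/-- Weight of an edge `x`: first position in `LY` of an edge adjacent to `x`,
or `LY.length` if there is none. -/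
noncomputable def fWt {V : Type*} (LY : List (Sym2 V)) (x : Sym2 V) : ℕ :=
  sInf ({LY.length} ∪ {k | ∃ y, LY[k]? = some y ∧ EdgesAdj x y})

lemma fWt_le {V : Type*} {LY : List (Sym2 V)} {x y : Sym2 V} {k : ℕ}
    (hy : LY[k]? = some y) (h : EdgesAdj x y) : fWt LY x ≤ k := by
  apply Nat.sInf_le
  exact Or.inr ⟨y, hy, h⟩

lemma fWt_spec {V : Type*} {LY : List (Sym2 V)} {x : Sym2 V}
    (h : fWt LY x < LY.length) : ∃ y, LY[fWt LY x]? = some y ∧ EdgesAdj x y := by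
  have hne : ({LY.length} ∪ {k | ∃ y, LY[k]? = some y ∧ EdgesAdj x y} : Set ℕ).Nonempty :=
    ⟨LY.length, Or.inl rfl⟩
  rcases Nat.sInf_mem hne with h1 | h2
  · exact absurd (Set.mem_singleton_iff.mp h1) (Nat.ne_of_lt h)
  · exact h2

lemma card_adj_le_two {V : Type*} {X : SimpleGraph V} (hX : IsMatchingGraph X)
    (yt : Sym2 V) (S : Finset (Sym2 V))
    (hS : ∀ x ∈ S, x ∈ X.edgeSet ∧ EdgesAdj x yt) : S.card ≤ 2 := by
  classical
  revert hS
  induction yt using Sym2.ind with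
  | _ v w =>
    intro hS
    have hmem : ∀ x ∈ S, (if v ∈ x then v else w) ∈ x := by
      intro x hx
      obtain ⟨-, -, u, hu1, hu2⟩ := hS x hx
      by_cases hv : v ∈ x
      · simpa [hv]
      · rw [Sym2.mem_iff] at hu2
        have huw : u = w := by
          rcases hu2 with rfl | rfl
          · exact absurd hu1 hv
          · rfl
        rw [if_neg hv, ← huw]
        exact hu1
    have hcard : S.card ≤ ({v, w} : Finset V).card := by
      apply Finset.card_le_card_of_injOn (fun x => if v ∈ x then v else w)
      · intro x hx
        by_cases hv : v ∈ x <;> simp [hv]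
      · intro x1 h1 x2 h2 heq
        by_contra hne
        have h1m := hmem x1 h1
        have h2m := hmem x2 h2
        have heq' : (if v ∈ x1 then v else w) = (if v ∈ x2 then v else w) := heq
        rw [← heq'] at h2m
        exact hX x1 (hS x1 h1).1 x2 (hS x2 h2).1 ⟨hne, _, h1m, h2m⟩
    exact hcard.trans ((Finset.card_insert_le _ _).trans (by simp))

/-- Lemma: let `X` and `Y` be edge-disjoint matchings and `ℓ_Y` a fixed ordering of `Y`.
Then there is an ordering `ℓ_X` of `X` such that `ms(ℓ_X ∨ ℓ_Y) ≥ |E(X)|/2`. -/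
theorem exists_ordering_msList_ge_half {V : Type*} [Fintype V] (X Y : SimpleGraph V)
    (LY : List (Sym2 V))
    (hX : IsMatchingGraph X) (hY : IsMatchingGraph Y)
    (hdisj : Disjoint X.edgeSet Y.edgeSet)
    (hXne : X.edgeSet.Nonempty) (hYne : Y.edgeSet.Nonempty)
    (hLY : IsOrdering Y LY) :
    ∃ LX : List (Sym2 V), IsOrdering X LX ∧
      (numEdges X : ℝ) / 2 ≤ (msList (LX ++ LY) : ℝ) := by
  classical
  set f : Sym2 V → ℕ := fWt LY with hfdef
  set r : Sym2 V → Sym2 V → Prop := fun a b => f a ≤ f b with hrdef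
  haveI : IsTotal (Sym2 V) r := ⟨fun a b => le_total _ _⟩
  haveI : IsTrans (Sym2 V) r := ⟨fun a b c => le_trans⟩
  set LX0 : List (Sym2 V) := (Set.toFinite X.edgeSet).toFinset.toList with hLX0
  set LX : List (Sym2 V) := List.insertionSort r LX0 with hLX
  have hperm : LX.Perm LX0 := List.perm_insertionSort r LX0
  have hsorted : LX.Pairwise r := List.pairwise_insertionSort r LX0
  have hnd : LX.Nodup := hperm.nodup_iff.mpr (Finset.nodup_toList _)
  have hmemX : ∀ e, e ∈ LX ↔ e ∈ X.edgeSet := by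
    intro e
    rw [hperm.mem_iff, hLX0, Finset.mem_toList, Set.Finite.mem_toFinset]
  set m := LX.length with hmdef
  have hmnum : numEdges X = m := by
    rw [numEdges, Nat.card_coe_set_eq, Set.ncard_eq_toFinset_card _ (Set.toFinite X.edgeSet),
      hmdef, hperm.length_eq, hLX0, Finset.length_toList]
  have hm1 : 1 ≤ m := by
    obtain ⟨e, he⟩ := hXne
    exact List.length_pos_iff.mpr (List.ne_nil_of_mem ((hmemX e).mpr he))
  have hLY1 : 1 ≤ LY.length := by
    obtain ⟨e, he⟩ := hYne
    exact List.length_pos_iff.mpr (List.ne_nil_of_mem ((hLY.2 e).mpr he))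
  -- the counting lemma
  have hcount : ∀ i k, ∀ hi : i < m, k < LY.length → f (LX[i]'hi) ≤ k →
      i + 1 ≤ 2 * (k + 1) := by
    intro i k hi hk hfk
    set S : Finset (Sym2 V) := (LX.take (i+1)).toFinset with hSdef
    have hndT : (LX.take (i+1)).Nodup := hnd.sublist (List.take_sublist _ _)
    have hScard : S.card = i + 1 := by
      rw [hSdef, List.toFinset_card_of_nodup hndT, List.length_take]
      omega
    have hSf : ∀ x ∈ S, f x ≤ k := by
      intro x hx
      rw [hSdef, List.mem_toFinset] at hx
      obtain ⟨t, ht, rfl⟩ := List.getElem_of_mem hx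
      have ht' : t ≤ i := by
        rw [List.length_take] at ht
        omega
      rw [List.getElem_take]
      rcases eq_or_lt_of_le ht' with rfl | hlt
      · exact hfk
      · have := hsorted.rel_get_of_lt
          (show (⟨t, by omega⟩ : Fin LX.length) < ⟨i, hi⟩ from hlt)
        simp only [List.get_eq_getElem] at this
        exact le_trans this hfk
    have hfib : ∀ t ∈ Finset.range (k+1), (S.filter (fun x => f x = t)).card ≤ 2 := by
      intro t htk
      have htY : t < LY.length := lt_of_le_of_lt (Nat.lt_succ_iff.mp (Finset.mem_range.mp htk)) hk
      apply card_adj_le_two hX (LY[t]'htY)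
      intro x hx
      rw [Finset.mem_filter] at hx
      obtain ⟨hxS, hxt⟩ := hx
      have hxLX : x ∈ LX := by
        rw [hSdef, List.mem_toFinset] at hxS
        exact List.mem_of_mem_take hxS
      refine ⟨(hmemX x).mp hxLX, ?_⟩
      obtain ⟨y, hy1, hy2⟩ := fWt_spec (LY := LY) (x := x) (by rw [← hfdef, hxt]; exact htY)
      rw [← hfdef, hxt, List.getElem?_eq_getElem htY] at hy1
      rwa [← Option.some.inj hy1] at hy2
    calc i + 1 = S.card := hScard.symm
      _ = ∑ t ∈ Finset.range (k+1), (S.filter (fun x => f x = t)).card :=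
          Finset.card_eq_sum_card_fiberwise
            (fun x hx => Finset.mem_range.mpr (Nat.lt_succ_of_le (hSf x hx)))
      _ ≤ ∑ _t ∈ Finset.range (k+1), 2 := Finset.sum_le_sum hfib
      _ = 2 * (k + 1) := by rw [Finset.sum_const, Finset.card_range]; ring
  refine ⟨LX, ⟨hnd, hmemX⟩, ?_⟩
  set s := (m + 1) / 2 with hs
  have hmem : s ∈ {s | 1 ≤ s ∧ s ≤ (LX ++ LY).length ∧ ∀ i j e e', i < j →
      (LX ++ LY)[i]? = some e → (LX ++ LY)[j]? = some e' → EdgesAdj e e' → s ≤ j - i} := by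
    refine ⟨by omega, by rw [List.length_append]; omega, ?_⟩
    intro i j e e' hij hi hj hadj
    by_cases hjm : j < m
    · -- both edges in LX : contradiction with X being a matching
      rw [List.getElem?_append_left (by omega : i < LX.length)] at hi
      rw [List.getElem?_append_left (by omega : j < LX.length)] at hj
      have he : e ∈ LX := List.mem_of_getElem? hi
      have he' : e' ∈ LX := List.mem_of_getElem? hj
      exact absurd hadj (hX e ((hmemX e).mp he) e' ((hmemX e').mp he'))
    by_cases him : i < m
    · -- main case : e in LX, e' in LY
      rw [List.getElem?_append_left (by omega : i < LX.length)] at hi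
      rw [List.getElem?_append_right (by omega : LX.length ≤ j)] at hj
      obtain ⟨hklen, hke⟩ := List.getElem?_eq_some_iff.mp hj
      obtain ⟨hilen, hie⟩ := List.getElem?_eq_some_iff.mp hi
      have hfe : f e ≤ j - m := fWt_le hj hadj
      have := hcount i (j - m) hilen hklen (by rw [hie]; exact hfe)
      omega
    · -- both edges in LY : contradiction with Y being a matching
      rw [List.getElem?_append_right (by omega : LX.length ≤ i)] at hi
      rw [List.getElem?_append_right (by omega : LX.length ≤ j)] at hj
      have he : e ∈ LY := List.mem_of_getElem? hi
      have he' : e' ∈ LY := List.mem_of_getElem? hj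
      exact absurd hadj (hY e ((hLY.2 e).mp he) e' ((hLY.2 e').mp he'))
  have hbdd : BddAbove {s | 1 ≤ s ∧ s ≤ (LX ++ LY).length ∧ ∀ i j e e', i < j →
      (LX ++ LY)[i]? = some e → (LX ++ LY)[j]? = some e' → EdgesAdj e e' → s ≤ j - i} :=
    ⟨(LX ++ LY).length, fun x hx => hx.2.1⟩
  have hle : s ≤ msList (LX ++ LY) := le_csSup hbdd hmem
  rw [hmnum]
  have h2s : m ≤ 2 * s := by omega
  calc (m : ℝ) / 2 ≤ (s : ℝ) := by
        rw [div_le_iff₀ (by norm_num : (0:ℝ) < 2)]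
        exact_mod_cast (by omega : m ≤ s * 2)
    _ ≤ (msList (LX ++ LY) : ℝ) := by exact_mod_cast hle
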